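/- Let f : ℝ → ℝ be a real-valued characteristic function of a probability measure on ℝ satisfying f(2s) = 2·f(s)² − 1 for all s ∈ ℝ. Then there exists a real number a such that f(s) = cos(a·s) for all s ∈ ℝ. -/

import Mathlib

open MeasureTheory Real

/-- If a real-valued characteristic function `f` of a symmetric probability measure on `ℝ`
satisfies `f(2s) = 2 f(s)² − 1`, then `f(s) = cos (a s)` for some real `a`. -/
theorem stmt1 (f : ℝ → ℝ) (μ : Measure ℝ) [IsProbabilityMeasure μ]
    (hsymm : μ.map (fun x => -x) = μ)
    (hf : ∀ s : ℝ, f s = ∫ x, Real.cos (s * x) ∂μ)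
    (heq : ∀ s : ℝ, f (2 * s) = 2 * f s ^ 2 - 1) :
    ∃ a : ℝ, ∀ s : ℝ, f s = Real.cos (a * s) := by
  have hint : ∀ s : ℝ, Integrable (fun x => Real.cos (s * x)) μ := by
    intro s
    refine (integrable_const (1:ℝ)).mono'
      ((Real.continuous_cos.comp (continuous_const.mul continuous_id)).aestronglyMeasurable)
      (Filter.Eventually.of_forall fun x => ?_)
    rw [Real.norm_eq_abs]; exact Real.abs_cos_le_one _
  have hsq : ∀ s : ℝ, Integrable (fun x => (Real.cos (s * x) - f s)^2) μ := by
    intro s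
    refine (integrable_const ((1 + |f s|)^2)).mono'
      (((Real.continuous_cos.comp (continuous_const.mul continuous_id)).sub
        continuous_const).pow 2).aestronglyMeasurable
      (Filter.Eventually.of_forall fun x => ?_)
    rw [Real.norm_eq_abs, abs_pow]
    have h1 : |Real.cos (s * x) - f s| ≤ 1 + |f s| := by
      calc |Real.cos (s * x) - f s| ≤ |Real.cos (s * x)| + |f s| := abs_sub _ _
        _ ≤ 1 + |f s| := by nlinarith [Real.abs_cos_le_one (s * x), abs_nonneg (f s)]
    have h0 : (0:ℝ) ≤ |Real.cos (s * x) - f s| := abs_nonneg _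
    nlinarith
  have hzero : ∀ s : ℝ, ∫ x, (Real.cos (s * x) - f s)^2 ∂μ = 0 := by
    intro s
    have e1 : (fun x => (Real.cos (s * x) - f s)^2)
        = fun x => ((1/2 + Real.cos (2*s*x)/2) - (2 * f s) * Real.cos (s * x)) + f s ^ 2 := by
      funext x
      rw [show (2:ℝ)*s*x = 2*(s*x) by ring]
      linear_combination Real.cos_sq (s*x)
    have i1 : Integrable (fun x => 1/2 + Real.cos (2*s*x)/2) μ :=
      (integrable_const _).add ((hint (2*s)).div_const 2)
    have i2 : Integrable (fun x => (2 * f s) * Real.cos (s * x)) μ := (hint s).const_mul _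
    have i12 : Integrable (fun x => 1/2 + Real.cos (2*s*x)/2 - (2 * f s) * Real.cos (s * x)) μ :=
      i1.sub i2
    rw [e1, integral_add i12 (integrable_const _), integral_sub i1 i2,
      integral_add (integrable_const _) ((hint (2*s)).div_const 2),
      integral_div (2:ℝ) (fun x => Real.cos (2*s*x)), integral_const_mul, integral_const, integral_const]
    simp only [measure_univ, probReal_univ, ENNReal.toReal_one, smul_eq_mul, one_mul]
    rw [← hf s, ← hf (2*s), heq s]
    ring
  have hae : ∀ s : ℝ, ∀ᵐ x ∂μ, Real.cos (s * x) = f s := by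
    intro s
    have h := (integral_eq_zero_iff_of_nonneg (fun x => sq_nonneg _) (hsq s)).mp (hzero s)
    filter_upwards [h] with x hx
    have hx' : (Real.cos (s * x) - f s)^2 = 0 := hx
    have := sq_eq_zero_iff.mp hx'
    linarith
  have hall : ∀ᵐ x ∂μ, ∀ q : ℚ, Real.cos ((q:ℝ) * x) = f q :=
    ae_all_iff.mpr fun q => hae q
  obtain ⟨x₀, hx₀⟩ := hall.exists
  refine ⟨x₀, ?_⟩
  have hcf : Continuous f := by
    have hc : Continuous fun s : ℝ => ∫ x, Real.cos (s * x) ∂μ := by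
      apply continuous_of_dominated (bound := fun _ => (1:ℝ))
      · intro s
        exact (Real.continuous_cos.comp (continuous_const.mul continuous_id)).aestronglyMeasurable
      · intro s
        exact Filter.Eventually.of_forall fun x => by
          rw [Real.norm_eq_abs]; exact Real.abs_cos_le_one _
      · exact integrable_const 1
      · exact Filter.Eventually.of_forall fun x =>
          Real.continuous_cos.comp (continuous_id.mul continuous_const)
    exact hc.congr fun s => (hf s).symm
  have hcg : Continuous fun s : ℝ => Real.cos (x₀ * s) :=
    Real.continuous_cos.comp (continuous_const.mul continuous_id)
  have hdense : Dense (Set.range ((↑) : ℚ → ℝ)) := Rat.denseRange_cast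
  have hEq : f = fun s : ℝ => Real.cos (x₀ * s) := by
    refine Continuous.ext_on hdense hcf hcg ?_
    rintro _ ⟨q, rfl⟩
    simpa [mul_comm] using (hx₀ q).symm
  exact fun s => congrFun hEq s
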